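/- arXiv:1401.3075 — 2 statements merged into one kernel-verified Lean document; each statement's English description precedes it below -/
import Mathlib

section
/- Let q = 2^p where 2^p - 1 is prime, and let ω ≥ 3 be an integer with q ≤ ω + 2. Then there do NOT exist elements α_1, ..., α_{ω-1}, δ_1, δ_2 in the multiplicative group of GF(q) such that δ_1 ≠ δ_2, α_j ≠ 1 for all j, and both δ_1 and δ_2 lie outside the set { γ_1 γ_2 ⋯ γ_{ω-1} : γ_j ∈ {1, α_j} for each j }. -/
open Finset

-- growth lemma
lemma grow_aux {F : Type} [Field F] [Fintype F] [DecidableEq F]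
    (hprime : (Fintype.card F - 1).Prime)
    (A : Finset F) (hA : A.Nonempty) (h0 : ∀ x ∈ A, x ≠ 0)
    (α : F) (hα0 : α ≠ 0) (hα1 : α ≠ 1) :
    min (A.card + 1) (Fintype.card F - 1) ≤ (A ∪ A.image (α * ·)).card := by
  by_cases hcase : ∃ a ∈ A, α * a ∉ A
  · obtain ⟨a, ha, hna⟩ := hcase
    have hsub : insert (α * a) A ⊆ A ∪ A.image (α * ·) := by
      intro x hx
      rcases Finset.mem_insert.mp hx with rfl | hx
      · exact Finset.mem_union_right _ (Finset.mem_image.mpr ⟨a, ha, rfl⟩)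
      · exact Finset.mem_union_left _ hx
    have := Finset.card_le_card hsub
    rw [Finset.card_insert_of_notMem hna] at this
    exact le_trans (min_le_left _ _) this
  · push_neg at hcase
    -- A closed under multiplication by α; show A contains all nonzero elements
    have hclosed : ∀ n : ℕ, ∀ a ∈ A, α ^ n * a ∈ A := by
      intro n
      induction n with
      | zero => intro a ha; simpa using ha
      | succ k ih =>
        intro a ha
        rw [pow_succ', mul_assoc]
        exact hcase _ (ih a ha)
    obtain ⟨a, ha⟩ := hA
    have ha0 : a ≠ 0 := h0 a ha
    -- units
    set u : Fˣ := Units.mk0 α hα0 with hu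
    have hu1 : u ≠ 1 := by
      intro h
      apply hα1
      have := congrArg (fun x : Fˣ => (x : F)) h
      simpa [hu] using this
    have hcard : Fintype.card Fˣ = Fintype.card F - 1 := Fintype.card_units (α := F)
    have hord : orderOf u = Fintype.card Fˣ := by
      rcases (hprime.eq_one_or_self_of_dvd (orderOf u) (by rw [← hcard]; exact orderOf_dvd_card)) with h1 | h2
      · exact absurd (orderOf_eq_one_iff.mp h1) hu1
      · rw [h2, hcard]
    have htop : Subgroup.zpowers u = ⊤ := by
      apply Subgroup.eq_top_of_card_eq
      rw [Nat.card_zpowers, hord, Nat.card_eq_fintype_card]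
    have hall : ∀ x : F, x ≠ 0 → x ∈ A := by
      intro x hx0
      set v : Fˣ := Units.mk0 (x * a⁻¹) (by
        exact mul_ne_zero hx0 (inv_ne_zero ha0)) with hv
      have hvz : v ∈ Subgroup.zpowers u := by rw [htop]; trivial
      have hvp : v ∈ Submonoid.powers u := by
        rwa [mem_powers_iff_mem_zpowers]
      obtain ⟨n, hn⟩ := hvp
      have hxe : x = α ^ n * a := by
        have := congrArg (fun w : Fˣ => (w : F)) hn
        simp only [Units.val_pow_eq_pow_val, hv, hu, Units.val_mk0] at this
        field_simp at this
        rw [this]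
      rw [hxe]
      exact hclosed n a ha
    have hsub : Finset.univ \ {(0 : F)} ⊆ A := by
      intro x hx
      simp only [Finset.mem_sdiff, Finset.mem_singleton] at hx
      exact hall x hx.2
    have hc : Fintype.card F - 1 ≤ A.card := by
      have := Finset.card_le_card hsub
      rwa [Finset.card_sdiff_of_subset (by simp), Finset.card_univ, Finset.card_singleton] at this
    calc min (A.card + 1) (Fintype.card F - 1) ≤ Fintype.card F - 1 := min_le_right _ _
      _ ≤ A.card := hc
      _ ≤ (A ∪ A.image (α * ·)).card := Finset.card_le_card Finset.subset_union_left

lemma subprod_card {F : Type} [Field F] [Fintype F] [DecidableEq F]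
    (hprime : (Fintype.card F - 1).Prime) :
    ∀ n (α : Fin n → F), (∀ j, α j ≠ 0) → (∀ j, α j ≠ 1) →
    min (n + 1) (Fintype.card F - 1) ≤
      (Finset.image (fun s : Finset (Fin n) => ∏ j ∈ s, α j) Finset.univ).card := by
  intro n
  induction n with
  | zero =>
    intro α _ _
    have h2 : 2 ≤ Fintype.card F - 1 := hprime.two_le
    have : (Finset.image (fun s : Finset (Fin 0) => ∏ j ∈ s, α j) Finset.univ).Nonempty :=
      Finset.Nonempty.image ⟨∅, Finset.mem_univ _⟩ _
    have := Finset.Nonempty.card_pos this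
    omega
  | succ k ih =>
    intro α h0 h1
    set A := Finset.image (fun s : Finset (Fin k) => ∏ j ∈ s, α (Fin.castSucc j)) Finset.univ with hA
    have hAne : A.Nonempty := Finset.Nonempty.image ⟨∅, Finset.mem_univ _⟩ _
    have hA0 : ∀ x ∈ A, x ≠ 0 := by
      intro x hx
      obtain ⟨s, _, rfl⟩ := Finset.mem_image.mp hx
      exact Finset.prod_ne_zero_iff.mpr fun j _ => h0 _
    have hIH := ih (fun j => α (Fin.castSucc j)) (fun j => h0 _) (fun j => h1 _)
    have hgrow := grow_aux hprime A hAne hA0 (α (Fin.last k)) (h0 _) (h1 _)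
    have hsub : A ∪ A.image ((α (Fin.last k)) * ·) ⊆
        Finset.image (fun s : Finset (Fin (k+1)) => ∏ j ∈ s, α j) Finset.univ := by
      intro x hx
      rcases Finset.mem_union.mp hx with hx | hx
      · obtain ⟨t, _, rfl⟩ := Finset.mem_image.mp hx
        refine Finset.mem_image.mpr ⟨t.map Fin.castSuccEmb, Finset.mem_univ _, ?_⟩
        rw [Finset.prod_map]
        rfl
      · obtain ⟨y, hy, rfl⟩ := Finset.mem_image.mp hx
        obtain ⟨t, _, rfl⟩ := Finset.mem_image.mp hy
        refine Finset.mem_image.mpr ⟨insert (Fin.last k) (t.map Fin.castSuccEmb), Finset.mem_univ _, ?_⟩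
        rw [Finset.prod_insert (by
          simp only [Finset.mem_map]
          rintro ⟨j, _, hj⟩
          exact absurd hj (Fin.castSucc_lt_last j).ne), Finset.prod_map]
        rfl
    have hcard := Finset.card_le_card hsub
    have hIH' : min (k + 1) (Fintype.card F - 1) ≤ A.card := by simpa [hA] using hIH
    have := le_trans hgrow hcard
    omega

theorem stmt_1 (p ω : ℕ) (hmp : (2 ^ p - 1).Prime) (hω : 3 ≤ ω)
    (hq : 2 ^ p ≤ ω + 2)
    (F : Type) [Field F] [Fintype F] (hF : Fintype.card F = 2 ^ p) :
    ¬ ∃ (α : Fin (ω - 1) → F) (δ₁ δ₂ : F),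
      (∀ j, α j ≠ 0) ∧ (∀ j, α j ≠ 1) ∧ δ₁ ≠ 0 ∧ δ₂ ≠ 0 ∧ δ₁ ≠ δ₂ ∧
      δ₁ ∉ {x : F | ∃ γ : Fin (ω - 1) → F,
        (∀ j, γ j = 1 ∨ γ j = α j) ∧ x = ∏ j, γ j} ∧
      δ₂ ∉ {x : F | ∃ γ : Fin (ω - 1) → F,
        (∀ j, γ j = 1 ∨ γ j = α j) ∧ x = ∏ j, γ j} := by
  classical
  rintro ⟨α, δ₁, δ₂, h0, h1, hδ₁0, hδ₂0, hne, hδ₁, hδ₂⟩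
  have hprime : (Fintype.card F - 1).Prime := by rw [hF]; exact hmp
  set S := Finset.image (fun s : Finset (Fin (ω - 1)) => ∏ j ∈ s, α j) Finset.univ with hS
  have hbound := subprod_card hprime (ω - 1) α h0 h1
  rw [← hS] at hbound
  -- every element of S lies in the product set
  have hmem : ∀ x ∈ S, ∃ γ : Fin (ω - 1) → F,
      (∀ j, γ j = 1 ∨ γ j = α j) ∧ x = ∏ j, γ j := by
    intro x hx
    obtain ⟨s, _, rfl⟩ := Finset.mem_image.mp hx
    refine ⟨fun j => if j ∈ s then α j else 1, fun j => by by_cases h : j ∈ s <;> simp [h], ?_⟩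
    rw [Finset.prod_ite_mem, Finset.univ_inter]
  have hsub : S ⊆ Finset.univ \ {(0 : F), δ₁, δ₂} := by
    intro x hx
    obtain ⟨γ, hγ, rfl⟩ := hmem x hx
    simp only [Finset.mem_sdiff, Finset.mem_univ, Finset.mem_insert, Finset.mem_singleton,
      true_and]
    push_neg
    refine ⟨?_, ?_, ?_⟩
    · refine Finset.prod_ne_zero_iff.mpr fun j _ => ?_
      rcases hγ j with h | h <;> rw [h]
      · exact one_ne_zero
      · exact h0 j
    · intro h; exact hδ₁ ⟨γ, hγ, h.symm⟩
    · intro h; exact hδ₂ ⟨γ, hγ, h.symm⟩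
  have hcard3 : ({(0 : F), δ₁, δ₂} : Finset F).card = 3 := by
    rw [Finset.card_insert_of_notMem (by simp [Ne.symm hδ₁0, Ne.symm hδ₂0]),
      Finset.card_insert_of_notMem (by simp [hne]), Finset.card_singleton]
  have hScard : S.card ≤ Fintype.card F - 3 := by
    have := Finset.card_le_card hsub
    rwa [Finset.card_sdiff_of_subset (Finset.subset_univ _), Finset.card_univ, hcard3] at this
  have h2p : 3 ≤ 2 ^ p := by have := hmp.two_le; omega
  rw [hF] at hScard hbound
  omega
end

section
/- Let ξ be a primitive element of GF(2^p) where 2^p - 1 is prime, and let a_1, ..., a_{ω-1} be integers with 1 ≤ a_i ≤ 2^p - 2. Then the set { γ_1 γ_2 ⋯ γ_{ω-1} : γ_i ∈ {1, ξ^{a_i}} for each i } ⊆ GF(2^p)^× contains at least min(ω, 2^p - 1) elements. -/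
open Finset

private def prodSet {F : Type} [Field F] [DecidableEq F] {n : ℕ} (t : Fin n → F) : Finset F :=
  Finset.image (fun b : Fin n → Bool => ∏ i, if b i then t i else 1) Finset.univ

private lemma prodSet_succ {F : Type} [Field F] [DecidableEq F] {n : ℕ} (t : Fin (n+1) → F) :
    prodSet t = prodSet (t ∘ Fin.succ) ∪ (prodSet (t ∘ Fin.succ)).image (t 0 * ·) := by
  ext x
  simp only [prodSet, mem_union, mem_image, mem_univ, true_and, Function.comp]
  constructor
  · rintro ⟨b, rfl⟩
    cases hb : b 0 with
    | false =>
      left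
      exact ⟨b ∘ Fin.succ, by rw [Fin.prod_univ_succ, hb]; simp [Function.comp]⟩
    | true =>
      right
      exact ⟨∏ i, if b (Fin.succ i) then t (Fin.succ i) else 1, ⟨b ∘ Fin.succ, rfl⟩,
        by rw [Fin.prod_univ_succ, hb]; simp⟩
  · rintro (⟨b, rfl⟩ | ⟨y, ⟨b, rfl⟩, rfl⟩)
    · exact ⟨Fin.cons false b, by rw [Fin.prod_univ_succ]; simp⟩
    · exact ⟨Fin.cons true b, by rw [Fin.prod_univ_succ]; simp⟩

private lemma one_mem_prodSet {F : Type} [Field F] [DecidableEq F] {n : ℕ} (t : Fin n → F) :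
    (1 : F) ∈ prodSet t :=
  Finset.mem_image.mpr ⟨fun _ => false, Finset.mem_univ _, by simp⟩

private lemma prodSet_card {F : Type} [Field F] [Fintype F] [DecidableEq F] {q : ℕ}
    (hq : q.Prime) :
    ∀ n (t : Fin n → F), (∀ i, orderOf (t i) = q) → min (n+1) q ≤ (prodSet t).card := by
  intro n
  induction n with
  | zero =>
    intro t ht
    have h1 : 1 ≤ (prodSet t).card := Finset.card_pos.mpr ⟨1, one_mem_prodSet t⟩
    have : min (0+1) q ≤ 1 := min_le_left _ _
    omega
  | succ n ih =>
    intro t ht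
    have ih' := ih (t ∘ Fin.succ) (fun i => ht i.succ)
    set S' := prodSet (t ∘ Fin.succ) with hS'def
    rw [prodSet_succ, ← hS'def]
    rcases le_or_gt q (n+1) with hle | hlt
    · have h1 : min (n+1) q = q := min_eq_right hle
      have h2 : min (n+1+1) q = q := min_eq_right (by omega)
      have := Finset.card_le_card (Finset.subset_union_left (s₁ := S')
        (s₂ := S'.image (t 0 * ·)))
      omega
    · have hn1 : n + 1 ≤ S'.card := by
        have : min (n+1) q = n+1 := min_eq_left hlt.le
        omega
      rcases le_or_gt q S'.card with hq' | hq'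
      · have := Finset.card_le_card (Finset.subset_union_left (s₁ := S')
          (s₂ := S'.image (t 0 * ·)))
        have := min_le_right (n+1+1) q
        omega
      · have ht0 : orderOf (t 0) = q := ht 0
        have ht0ne : t 0 ≠ 0 := by
          intro h
          have h1 := pow_orderOf_eq_one (t 0)
          rw [ht0, h, zero_pow hq.ne_zero] at h1
          exact zero_ne_one h1
        by_cases hsub : S'.image (t 0 * ·) ⊆ S'
        · exfalso
          have hx : ∀ k, ∀ y ∈ S', t 0 ^ k * y ∈ S' := by
            intro k
            induction k with
            | zero => intro y hy; simpa using hy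
            | succ k ihk =>
              intro y hy
              have h1 := hsub (Finset.mem_image_of_mem _ (ihk y hy))
              have : t 0 * (t 0 ^ k * y) = t 0 ^ (k+1) * y := by ring
              rwa [this] at h1
          have hmem : ∀ k ∈ Finset.range q, t 0 ^ k ∈ S' := by
            intro k _
            simpa using hx k 1 (one_mem_prodSet _)
          have hinj : Set.InjOn (fun k => t 0 ^ k) ↑(Finset.range q) := by
            have key : ∀ i j : ℕ, i < q → j < q → i ≤ j → t 0 ^ i = t 0 ^ j → i = j := by
              intro i j hi hj hij heq
              have : t 0 ^ i * t 0 ^ (j - i) = t 0 ^ i * 1 := by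
                rw [mul_one, ← pow_add]
                rw [heq]
                congr 1
                omega
              have h2 : t 0 ^ (j - i) = 1 := mul_left_cancel₀ (pow_ne_zero _ ht0ne) this
              have h3 : orderOf (t 0) ∣ j - i := orderOf_dvd_of_pow_eq_one h2
              rw [ht0] at h3
              rcases Nat.eq_zero_of_dvd_of_lt h3 (by omega) with h
              omega
              -- j - i < q needed; handle below
            intro i hi j hj hij
            simp only [Finset.coe_range, Set.mem_Iio] at hi hj
            rcases le_total i j with h | h
            · exact key i j hi hj h hij
            · exact (key j i hj hi h hij.symm).symm
          have hcard : q ≤ S'.card := by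
            have h5 := Finset.card_le_card_of_injOn (fun k => t 0 ^ k) hmem hinj
            rwa [Finset.card_range] at h5
          omega
        · obtain ⟨y, hy, hyn⟩ := Finset.not_subset.mp hsub
          have hins : insert y S' ⊆ S' ∪ S'.image (t 0 * ·) :=
            Finset.insert_subset (Finset.mem_union_right _ hy) Finset.subset_union_left
          have := Finset.card_le_card hins
          rw [Finset.card_insert_of_notMem hyn] at this
          have hm : min (n+1+1) q ≤ S'.card + 1 := le_trans (min_le_left _ _) (by omega)
          omega

theorem stmt_18 (p ω : ℕ) (hmp : (2 ^ p - 1).Prime)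
    (F : Type) [Field F] [Fintype F] (hF : Fintype.card F = 2 ^ p)
    (ξ : F) (hξ : orderOf ξ = 2 ^ p - 1)
    (a : Fin (ω - 1) → ℕ) (ha : ∀ i, 1 ≤ a i ∧ a i ≤ 2 ^ p - 2) :
    min ω (2 ^ p - 1) ≤
      Set.ncard {x : F | ∃ γ : Fin (ω - 1) → F,
        (∀ i, γ i = 1 ∨ γ i = ξ ^ a i) ∧ x = ∏ i, γ i} := by
  classical
  set q := 2 ^ p - 1 with hqdef
  have hq2 : 2 ≤ q := hmp.two_le
  set t : Fin (ω-1) → F := fun i => ξ ^ a i with htdef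
  have ht : ∀ i, orderOf (t i) = q := by
    intro i
    obtain ⟨h1, h2⟩ := ha i
    have hnd : ¬ q ∣ a i := by
      intro hdvd
      have := Nat.le_of_dvd (by omega) hdvd
      have hp1 : 1 ≤ 2 ^ p := Nat.one_le_two_pow
      omega
    have hco : Nat.gcd q (a i) = 1 := (Nat.Prime.coprime_iff_not_dvd hmp).mpr hnd
    show orderOf (ξ ^ a i) = q
    rw [orderOf_pow' ξ (by omega), hξ, hco, Nat.div_one]
  have hset : {x : F | ∃ γ : Fin (ω - 1) → F,
      (∀ i, γ i = 1 ∨ γ i = ξ ^ a i) ∧ x = ∏ i, γ i} = ↑(prodSet t) := by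
    ext x
    simp only [Set.mem_setOf_eq, prodSet, Finset.coe_image, Set.mem_image, Finset.mem_coe,
      Finset.mem_univ, Set.mem_univ, Finset.coe_univ, true_and]
    constructor
    · rintro ⟨γ, hγ, rfl⟩
      refine ⟨fun i => decide (γ i = t i), ?_⟩
      refine Finset.prod_congr rfl ?_
      intro i _
      show (if decide (γ i = t i) = true then t i else 1) = γ i
      rcases hγ i with h | h
      · by_cases hc : γ i = t i
        · simp [hc]
        · have hd : (decide (γ i = t i)) = false := by simp [hc]
          rw [hd]
          simp only [Bool.false_eq_true, if_false]
          exact h.symm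
      · have hc : γ i = t i := h
        simp [hc]
    · rintro ⟨b, rfl⟩
      exact ⟨fun i => if b i then t i else 1,
        fun i => by by_cases h : b i <;> simp [h, htdef], rfl⟩
  rw [hset, Set.ncard_coe_finset]
  have hmain := prodSet_card hmp (ω-1) t ht
  have : min ω q ≤ min (ω-1+1) q := min_le_min (by omega) le_rfl
  omega
end
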